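/- arXiv:2003.10939 — 2 statements merged into one kernel-verified Lean document; each statement's English description precedes it below -/
import Mathlib

section
/- Let A be an M×N matrix over the quaternions with decomposition A = A_h + A_v·j where A_h, A_v are complex matrices. Then the right periodic autocorrelation satisfies R_A = R_{A_h} + R_{A_v} + (A_v ⋆ A_h − A_h ⋆ A_v)·j, where ⋆ denotes the conjugate-free periodic cross-correlation. -/
noncomputable section
open scoped BigOperators

/-- Embedding of ℂ into the quaternions (zero j and k components). -/
def cq (z : ℂ) : Quaternion ℝ := ⟨z.re, z.im, 0, 0⟩

/-- The quaternion unit i. -/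
def qi : Quaternion ℝ := ⟨0, 1, 0, 0⟩

/-- The quaternion unit j. -/
def qj : Quaternion ℝ := ⟨0, 0, 1, 0⟩

/-- The quaternion unit k. -/
def qk : Quaternion ℝ := ⟨0, 0, 0, 1⟩

/-- Conjugate-free periodic cross-correlation of quaternion matrices. -/
def qcorr {M N : ℕ} [NeZero M] [NeZero N]
    (X Y : Matrix (ZMod M) (ZMod N) (Quaternion ℝ)) :
    Matrix (ZMod M) (ZMod N) (Quaternion ℝ) :=
  fun m n => ∑ k, ∑ l, X k l * Y (k + m) (l + n)

/-- Right periodic autocorrelation of a quaternion matrix. -/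
def Rq {M N : ℕ} [NeZero M] [NeZero N]
    (A : Matrix (ZMod M) (ZMod N) (Quaternion ℝ)) :
    Matrix (ZMod M) (ZMod N) (Quaternion ℝ) :=
  qcorr A (fun k l => star (A k l))

/-- Conjugate-free periodic cross-correlation of complex matrices. -/
def ccorr {M N : ℕ} [NeZero M] [NeZero N]
    (X Y : Matrix (ZMod M) (ZMod N) ℂ) : Matrix (ZMod M) (ZMod N) ℂ :=
  fun m n => ∑ k, ∑ l, X k l * Y (k + m) (l + n)

/-- Complex 2D periodic autocorrelation. -/
def Rc {M N : ℕ} [NeZero M] [NeZero N]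
    (A : Matrix (ZMod M) (ZMod N) ℂ) : Matrix (ZMod M) (ZMod N) ℂ :=
  ccorr A (fun k l => star (A k l))


@[simp] lemma cq_re (z : ℂ) : (cq z).re = z.re := rfl
@[simp] lemma cq_imI (z : ℂ) : (cq z).imI = z.im := rfl
@[simp] lemma cq_imJ (z : ℂ) : (cq z).imJ = 0 := rfl
@[simp] lemma cq_imK (z : ℂ) : (cq z).imK = 0 := rfl
@[simp] lemma qj_re : qj.re = 0 := rfl
@[simp] lemma qj_imI : qj.imI = 0 := rfl
@[simp] lemma qj_imJ : qj.imJ = 1 := rfl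
@[simp] lemma qj_imK : qj.imK = 0 := rfl

def cqHom : ℂ →+ Quaternion ℝ where
  toFun := cq
  map_zero' := by ext <;> simp <;> rfl
  map_add' z w := by ext <;> simp

lemma key (a b c d : ℂ) :
    (cq a + cq b * qj) * star (cq c + cq d * qj) =
      cq (a * star c + b * star d) + cq (b * c - a * d) * qj := by
  ext <;>
    simp [Quaternion.ext_iff, Complex.ext_iff, Complex.mul_re, Complex.mul_im,
      Quaternion.re_mul, Quaternion.imI_mul, Quaternion.imJ_mul, Quaternion.imK_mul] <;>
    ring

theorem autocorrelation_decomposition {M N : ℕ} [NeZero M] [NeZero N]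
    (Ah Av : Matrix (ZMod M) (ZMod N) ℂ)
    (A : Matrix (ZMod M) (ZMod N) (Quaternion ℝ))
    (hA : ∀ k l, A k l = cq (Ah k l) + cq (Av k l) * qj) :
    ∀ m n, Rq A m n =
      cq (Rc Ah m n) + cq (Rc Av m n) +
        cq (ccorr Av Ah m n - ccorr Ah Av m n) * qj := by
  intro m n
  show (∑ k, ∑ l, A k l * star (A (k+m) (l+n))) = _
  have : ∀ k l, A k l * star (A (k+m) (l+n)) =
      cq (Ah k l * star (Ah (k+m) (l+n)) + Av k l * star (Av (k+m) (l+n))) +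
        cq (Av k l * Ah (k+m) (l+n) - Ah k l * Av (k+m) (l+n)) * qj := by
    intro k l
    rw [hA, hA, key]
  simp only [this]
  have hc : ∀ z : ℂ, cq z = cqHom z := fun _ => rfl
  simp only [Finset.sum_add_distrib, ← Finset.sum_mul, hc, ← map_sum, Rc, ccorr, map_sub, map_add]
  congr 2
  · simp [Finset.sum_sub_distrib, ← map_sum]
end
end

section
/- Two complex M×N matrices X and Y with ‖X‖_F = ‖Y‖_F = √(MN) form a periodic complementary pair (R_X(m,n) + R_Y(m,n) = 0 for all (m,n) ≠ (0,0)) if and only if |F(X)(u,v)|² + |F(Y)(u,v)|² = 2MN for all (u,v), where F denotes the 2D discrete Fourier transform. -/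
noncomputable section
open scoped BigOperators

/-- 2D discrete Fourier transform of an M×N complex matrix. -/
def dft2 {M N : ℕ} [NeZero M] [NeZero N]
    (A : Matrix (ZMod M) (ZMod N) ℂ) : Matrix (ZMod M) (ZMod N) ℂ :=
  fun u v => ∑ k, ∑ l, A k l *
    Complex.exp (-(2 * Real.pi * Complex.I) *
      (((k.val * u.val : ℕ) : ℂ) / (M : ℂ) + ((l.val * v.val : ℕ) : ℂ) / (N : ℂ)))

open Complex Finset

noncomputable def ez (M : ℕ) (a : ℤ) : ℂ :=
  Complex.exp (-(2 * Real.pi * Complex.I) * a / M)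

lemma ez_add (M : ℕ) (a b : ℤ) : ez M (a + b) = ez M a * ez M b := by
  rw [ez, ez, ez, ← Complex.exp_add]; congr 1; push_cast; ring

lemma ez_zero (M : ℕ) : ez M 0 = 1 := by simp [ez]

lemma ez_mul_self (M : ℕ) [NeZero M] (c : ℤ) : ez M (M * c) = 1 := by
  rw [ez]
  have hM : (M : ℂ) ≠ 0 := Nat.cast_ne_zero.mpr (NeZero.ne M)
  have : -(2 * Real.pi * Complex.I) * ((M : ℤ) * c : ℤ) / M = (-c : ℤ) * (2 * Real.pi * Complex.I) := by
    push_cast; field_simp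
  rw [this, Complex.exp_int_mul_two_pi_mul_I]

lemma ez_congr (M : ℕ) [NeZero M] {a b : ℤ} (h : (a : ZMod M) = (b : ZMod M)) :
    ez M a = ez M b := by
  have hd : (M : ℤ) ∣ b - a := Int.ModEq.dvd ((ZMod.intCast_eq_intCast_iff' a b M).mp h)
  obtain ⟨c, hc⟩ := hd
  have : b = a + (M : ℤ) * c := by omega
  rw [this, ez_add, ez_mul_self, mul_one]

lemma ez_conj (M : ℕ) (a : ℤ) : (starRingEnd ℂ) (ez M a) = ez M (-a) := by
  rw [ez, ez, ← Complex.exp_conj]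
  congr 1
  simp [map_div₀, Complex.conj_I, map_ofNat]

lemma sum_pow_val (M : ℕ) [NeZero M] (r : ℂ) :
    ∑ u : ZMod M, r ^ u.val = ∑ i ∈ Finset.range M, r ^ i := by
  refine Finset.sum_nbij' (fun u => u.val) (fun i => (i : ZMod M)) ?_ ?_ ?_ ?_ ?_
  · intro u _; exact Finset.mem_range.mpr (ZMod.val_lt u)
  · intro i _; exact Finset.mem_univ _
  · intro u _; exact (ZMod.natCast_rightInverse u)
  · intro i hi; exact ZMod.val_natCast_of_lt (Finset.mem_range.mp hi)
  · intro u _; rfl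

lemma ez_pow (M : ℕ) [NeZero M] (a : ℤ) (n : ℕ) : ez M (a * n) = ez M a ^ n := by
  rw [ez, ez, ← Complex.exp_nat_mul]; congr 1; push_cast; ring

lemma sum_ez (M : ℕ) [NeZero M] (m : ZMod M) :
    ∑ u : ZMod M, ez M ((m.val : ℤ) * u.val) = if m = 0 then (M : ℂ) else 0 := by
  have h1 : ∀ u : ZMod M, ez M ((m.val : ℤ) * u.val) = ez M (m.val) ^ u.val :=
    fun u => ez_pow M m.val u.val
  simp_rw [h1]
  rw [sum_pow_val]
  by_cases hm : m = 0
  · simp [hm, ez_zero, ZMod.val_zero]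
  · rw [if_neg hm]
    have hr1 : ez M (m.val) ≠ 1 := by
      intro h
      rw [ez, Complex.exp_eq_one_iff] at h
      obtain ⟨n, hn⟩ := h
      have hM : (M : ℂ) ≠ 0 := Nat.cast_ne_zero.mpr (NeZero.ne M)
      have h2pi : (2 * (Real.pi:ℂ) * Complex.I) ≠ 0 := by
        simp [Complex.I_ne_zero, Real.pi_ne_zero, Complex.ofReal_ne_zero]
      rw [div_eq_iff hM] at hn
      have h4 : (2 * (Real.pi:ℂ) * Complex.I) * (-(m.val:ℂ)) = (2 * (Real.pi:ℂ) * Complex.I) * (n * M) := by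
        linear_combination hn
      have h5 : (-(m.val:ℂ)) = n * M := mul_left_cancel₀ h2pi h4
      have h6 : ((m.val:ℤ):ℂ) = ((-(n*(M:ℤ)) : ℤ) : ℂ) := by push_cast; linear_combination -h5
      have h7 : (m.val:ℤ) = -(n*(M:ℤ)) := by exact_mod_cast h6
      have h8 : (M:ℤ) ∣ (m.val:ℤ) := ⟨-n, by rw [h7]; ring⟩
      have h9 : M ∣ m.val := by exact_mod_cast h8
      have h10 : m.val ≠ 0 := fun h => hm ((ZMod.val_eq_zero m).mp h)
      have := ZMod.val_lt m
      have := Nat.le_of_dvd (Nat.pos_of_ne_zero h10) h9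
      omega
    have hrM : ez M (m.val) ^ M = 1 := by
      rw [← ez_pow]
      have : ((m.val : ℤ)) * (M:ℕ) = (M:ℤ) * m.val := by ring
      rw [this, ez_mul_self]
    rw [geom_sum_eq hr1, hrM]
    simp

lemma sum_ez_neg (M : ℕ) [NeZero M] (m : ZMod M) :
    ∑ u : ZMod M, ez M (-((m.val : ℤ) * u.val)) = if m = 0 then (M : ℂ) else 0 := by
  have h := congrArg (starRingEnd ℂ) (sum_ez M m)
  rw [map_sum] at h
  simp_rw [ez_conj] at h
  rwa [apply_ite (starRingEnd ℂ), map_natCast, map_zero] at h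

lemma natCast_val_self {M : ℕ} [NeZero M] (x : ZMod M) : ((x.val : ℕ) : ZMod M) = x :=
  ZMod.natCast_rightInverse x

lemma ez_neg_val {M : ℕ} [NeZero M] (k u : ZMod M) :
    ez M ((k.val : ℤ) * ((-u).val : ℤ)) = ez M (-((k.val : ℤ) * (u.val : ℤ))) := by
  apply ez_congr
  push_cast [natCast_val_self]
  ring

lemma ez_val_sub {M : ℕ} [NeZero M] (p k u : ZMod M) :
    ez M (((p - k).val : ℤ) * u.val)
      = ez M ((p.val : ℤ) * u.val) * ez M (-((k.val : ℤ) * u.val)) := by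
  rw [← ez_add]
  apply ez_congr
  push_cast [natCast_val_self]
  ring

lemma sum4_comm {α β γ δ : Type*} [Fintype α] [Fintype β] [Fintype γ] [Fintype δ]
    (f : α → β → γ → δ → ℂ) :
    ∑ a, ∑ b, ∑ c, ∑ d, f a b c d = ∑ c, ∑ d, ∑ a, ∑ b, f a b c d := by
  calc ∑ a, ∑ b, ∑ c, ∑ d, f a b c d
      = ∑ a, ∑ c, ∑ b, ∑ d, f a b c d := Finset.sum_congr rfl fun a _ => Finset.sum_comm
    _ = ∑ c, ∑ a, ∑ b, ∑ d, f a b c d := Finset.sum_comm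
    _ = ∑ c, ∑ a, ∑ d, ∑ b, f a b c d :=
        Finset.sum_congr rfl fun c _ => Finset.sum_congr rfl fun a _ => Finset.sum_comm
    _ = ∑ c, ∑ d, ∑ a, ∑ b, f a b c d := Finset.sum_congr rfl fun c _ => Finset.sum_comm

lemma dft2_expand {M N : ℕ} [NeZero M] [NeZero N]
    (A : Matrix (ZMod M) (ZMod N) ℂ) (u : ZMod M) (v : ZMod N) :
    dft2 A u v = ∑ k, ∑ l, A k l * (ez M ((k.val : ℤ) * u.val) * ez N ((l.val : ℤ) * v.val)) := by
  unfold dft2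
  refine Finset.sum_congr rfl fun k _ => Finset.sum_congr rfl fun l _ => ?_
  congr 1
  rw [ez, ez, ← Complex.exp_add]
  congr 1
  push_cast
  ring

lemma dft2_Rc {M N : ℕ} [NeZero M] [NeZero N]
    (A : Matrix (ZMod M) (ZMod N) ℂ) (u : ZMod M) (v : ZMod N) :
    dft2 (Rc A) u v = dft2 A (-u) (-v) * (starRingEnd ℂ) (dft2 A (-u) (-v)) := by
  have hR : dft2 A (-u) (-v) * (starRingEnd ℂ) (dft2 A (-u) (-v))
      = ∑ k, ∑ l, ∑ p, ∑ q,
          (A k l * (ez M (-((k.val : ℤ) * u.val)) * ez N (-((l.val : ℤ) * v.val)))) *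
          ((starRingEnd ℂ) (A p q) * (ez M ((p.val : ℤ) * u.val) * ez N ((q.val : ℤ) * v.val))) := by
    rw [dft2_expand]
    simp_rw [ez_neg_val]
    rw [map_sum]
    simp_rw [map_sum, map_mul, ez_conj, neg_neg]
    rw [Finset.sum_mul_sum]
    refine Finset.sum_congr rfl fun k _ => ?_
    simp_rw [Finset.sum_mul_sum]
    exact Finset.sum_comm
  rw [hR]
  rw [dft2_expand]
  unfold Rc ccorr
  simp only [Finset.sum_mul]
  rw [sum4_comm]
  refine Finset.sum_congr rfl fun k _ => ?_
  refine Finset.sum_congr rfl fun l _ => ?_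
  refine Fintype.sum_equiv (Equiv.addLeft k) _ _ fun m => ?_
  refine Fintype.sum_equiv (Equiv.addLeft l) _ _ fun n => ?_
  show A k l * star (A (k + m) (l + n)) * (ez M ((m.val : ℤ) * u.val) * ez N ((n.val : ℤ) * v.val))
    = A k l * (ez M (-((k.val : ℤ) * u.val)) * ez N (-((l.val : ℤ) * v.val))) *
      ((starRingEnd ℂ) (A (k + m) (l + n)) *
        (ez M (((k + m).val : ℤ) * u.val) * ez N (((l + n).val : ℤ) * v.val)))
  have h1 : ez M (((k + m).val : ℤ) * u.val)
      = ez M ((k.val : ℤ) * u.val) * ez M ((m.val : ℤ) * u.val) := by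
    rw [← ez_add]; apply ez_congr; push_cast [natCast_val_self]; ring
  have h2 : ez N (((l + n).val : ℤ) * v.val)
      = ez N ((l.val : ℤ) * v.val) * ez N ((n.val : ℤ) * v.val) := by
    rw [← ez_add]; apply ez_congr; push_cast [natCast_val_self]; ring
  have e1 : ez M (-((k.val : ℤ) * u.val)) * ez M ((k.val : ℤ) * u.val) = 1 := by
    rw [← ez_add]; simp [ez_zero]
  have e2 : ez N (-((l.val : ℤ) * v.val)) * ez N ((l.val : ℤ) * v.val) = 1 := by
    rw [← ez_add]; simp [ez_zero]
  rw [h1, h2]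
  calc A k l * star (A (k + m) (l + n)) * (ez M ((m.val : ℤ) * u.val) * ez N ((n.val : ℤ) * v.val))
      = A k l * star (A (k + m) (l + n)) * (ez M ((m.val : ℤ) * u.val) * ez N ((n.val : ℤ) * v.val)) *
        ((ez M (-((k.val : ℤ) * u.val)) * ez M ((k.val : ℤ) * u.val)) *
         (ez N (-((l.val : ℤ) * v.val)) * ez N ((l.val : ℤ) * v.val))) := by rw [e1, e2]; ring
    _ = _ := by rw [RCLike.star_def]; ring

lemma dft2_inv {M N : ℕ} [NeZero M] [NeZero N]
    (g : Matrix (ZMod M) (ZMod N) ℂ) (m : ZMod M) (n : ZMod N) :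
    ∑ u, ∑ v, dft2 g u v * (ez M (-((m.val : ℤ) * u.val)) * ez N (-((n.val : ℤ) * v.val)))
      = (M : ℂ) * N * g m n := by
  simp_rw [dft2_expand, Finset.sum_mul]
  rw [sum4_comm]
  have key : ∀ (k : ZMod M) (l : ZMod N),
      (∑ u : ZMod M, ∑ v : ZMod N, (g k l * (ez M ((k.val:ℤ)*u.val) * ez N ((l.val:ℤ)*v.val))) *
        (ez M (-((m.val:ℤ)*u.val)) * ez N (-((n.val:ℤ)*v.val))))
      = g k l * ((if k = m then (M:ℂ) else 0) * (if l = n then (N:ℂ) else 0)) := by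
    intro k l
    have h : ∀ (u : ZMod M) (v : ZMod N),
        (g k l * (ez M ((k.val:ℤ)*u.val) * ez N ((l.val:ℤ)*v.val))) *
          (ez M (-((m.val:ℤ)*u.val)) * ez N (-((n.val:ℤ)*v.val)))
        = g k l * (ez M (((k-m).val:ℤ)*u.val) * ez N (((l-n).val:ℤ)*v.val)) := by
      intro u v; rw [ez_val_sub k m u, ez_val_sub l n v]; ring
    simp_rw [h, ← Finset.mul_sum]
    rw [← Finset.sum_mul, sum_ez, sum_ez]
    simp [sub_eq_zero]
  simp only [key]
  rw [Finset.sum_eq_single m (fun k _ hk => by simp [hk]) (by simp)]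
  rw [Finset.sum_eq_single n (fun l _ hl => by simp [hl]) (by simp)]
  simp
  ring

theorem pcp_iff_dft {M N : ℕ} [NeZero M] [NeZero N]
    (X Y : Matrix (ZMod M) (ZMod N) ℂ)
    (hX : ∑ k, ∑ l, ‖X k l‖ ^ 2 = (M * N : ℝ))
    (hY : ∑ k, ∑ l, ‖Y k l‖ ^ 2 = (M * N : ℝ)) :
    (∀ m n, (m, n) ≠ (0, 0) → Rc X m n + Rc Y m n = 0) ↔
    (∀ u v, ‖dft2 X u v‖ ^ 2 + ‖dft2 Y u v‖ ^ 2
      = (2 * M * N : ℝ)) := by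
  have hRc0 : ∀ (A : Matrix (ZMod M) (ZMod N) ℂ),
      (∑ k, ∑ l, ‖A k l‖ ^ 2 = (M * N : ℝ)) → Rc A 0 0 = ((M * N : ℝ) : ℂ) := by
    intro A hA
    have : Rc A 0 0 = ((∑ k, ∑ l, ‖A k l‖ ^ 2 : ℝ) : ℂ) := by
      unfold Rc ccorr
      push_cast
      refine Finset.sum_congr rfl fun k _ => Finset.sum_congr rfl fun l _ => ?_
      rw [add_zero, add_zero, RCLike.star_def, Complex.mul_conj]
      norm_cast
      exact (Complex.sq_norm _).symm
    rw [this, hA]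
  constructor
  · intro h u v
    have hsum : ∀ (w1 : ZMod M) (w2 : ZMod N),
        dft2 (Rc X) w1 w2 + dft2 (Rc Y) w1 w2 = ((2 * M * N : ℝ) : ℂ) := by
      intro w1 w2
      rw [dft2_expand, dft2_expand, ← Finset.sum_add_distrib]
      simp_rw [← Finset.sum_add_distrib, ← add_mul]
      rw [Finset.sum_eq_single (0 : ZMod M)
        (fun m _ hm => Finset.sum_eq_zero fun n _ => by rw [h m n (by simp [hm]), zero_mul])
        (by simp)]
      rw [Finset.sum_eq_single (0 : ZMod N)
        (fun n _ hn => by rw [h 0 n (by simp [hn]), zero_mul])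
        (by simp)]
      have e0 : ez M ((((0 : ZMod M)).val : ℤ) * (w1.val : ℤ)) = 1 := by
        simp [ZMod.val_zero, ez_zero]
      have e0' : ez N ((((0 : ZMod N)).val : ℤ) * (w2.val : ℤ)) = 1 := by
        simp [ZMod.val_zero, ez_zero]
      rw [e0, e0', hRc0 X hX, hRc0 Y hY]
      push_cast
      ring
    have hw := hsum (-u) (-v)
    rw [dft2_Rc, dft2_Rc, neg_neg, neg_neg, Complex.mul_conj, Complex.mul_conj,
      ← Complex.ofReal_add] at hw
    have hr : Complex.normSq (dft2 X u v) + Complex.normSq (dft2 Y u v) = (2 * M * N : ℝ) := by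
      exact_mod_cast hw
    rw [Complex.sq_norm, Complex.sq_norm]
    exact hr
  · intro h m n hmn
    have hMN : ((M : ℂ) * N) ≠ 0 :=
      mul_ne_zero (Nat.cast_ne_zero.mpr (NeZero.ne M)) (Nat.cast_ne_zero.mpr (NeZero.ne N))
    have key : ∀ u v, dft2 (Rc X) u v + dft2 (Rc Y) u v = ((2 * M * N : ℝ) : ℂ) := by
      intro u v
      rw [dft2_Rc, dft2_Rc, Complex.mul_conj, Complex.mul_conj, ← Complex.ofReal_add]
      congr 1
      rw [← Complex.sq_norm, ← Complex.sq_norm]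
      exact h (-u) (-v)
    have T1 : ∑ u : ZMod M, ∑ v : ZMod N,
        (dft2 (Rc X) u v + dft2 (Rc Y) u v) *
          (ez M (-((m.val : ℤ) * u.val)) * ez N (-((n.val : ℤ) * v.val)))
        = (M : ℂ) * N * (Rc X m n + Rc Y m n) := by
      simp_rw [add_mul, Finset.sum_add_distrib]
      rw [dft2_inv, dft2_inv]
      ring
    have T2 : ∑ u : ZMod M, ∑ v : ZMod N,
        (dft2 (Rc X) u v + dft2 (Rc Y) u v) *
          (ez M (-((m.val : ℤ) * u.val)) * ez N (-((n.val : ℤ) * v.val))) = 0 := by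
      simp only [key]
      have hstep : ∀ u : ZMod M, ∑ v : ZMod N,
          ((2 * M * N : ℝ) : ℂ) * (ez M (-((m.val : ℤ) * u.val)) * ez N (-((n.val : ℤ) * v.val)))
          = ((2 * M * N : ℝ) : ℂ) * ez M (-((m.val : ℤ) * u.val)) *
            ∑ v : ZMod N, ez N (-((n.val : ℤ) * v.val)) := by
        intro u
        rw [Finset.mul_sum]
        exact Finset.sum_congr rfl fun v _ => by ring
      simp_rw [hstep]
      have hcases : m ≠ 0 ∨ n ≠ 0 := by
        rcases eq_or_ne m 0 with rfl | hm
        · right; intro hn0; exact hmn (by simp [hn0])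
        · left; exact hm
      rcases hcases with hm | hn
      · rw [← Finset.sum_mul, ← Finset.mul_sum, sum_ez_neg, if_neg hm]
        simp
      · rw [sum_ez_neg, if_neg hn]
        simp
    have := T1.symm.trans T2
    exact (mul_eq_zero.mp this).resolve_left hMN
end
end
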